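/- If a subcubic graph G admits a (1,1,2,2)-packing coloring, then its subdivision S(G) has packing chromatic number at most 5, i.e., S(G) admits a (1,2,3,4,5)-packing coloring. -/
import Mathlib

def IsPackingColoring {V : Type*} (G : SimpleGraph V) {k : ℕ} (s : Fin k → ℕ)
    (f : V → Fin k) : Prop :=
  ∀ u v : V, u ≠ v → f u = f v → G.Reachable u v → s (f u) + 1 ≤ G.dist u v

def subdivision {V : Type*} (G : SimpleGraph V) : SimpleGraph (V ⊕ G.edgeSet) :=
  SimpleGraph.fromRel (fun x y =>
    match x, y with
    | Sum.inl u, Sum.inr e => u ∈ (e.1 : Sym2 V)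
    | _, _ => False)

lemma subdiv_adj_inl_inl {V : Type*} (G : SimpleGraph V) (u w : V) :
    ¬ (subdivision G).Adj (Sum.inl u) (Sum.inl w) := by
  simp [subdivision, SimpleGraph.fromRel_adj]

lemma subdiv_adj_inr_inr {V : Type*} (G : SimpleGraph V) (e e' : G.edgeSet) :
    ¬ (subdivision G).Adj (Sum.inr e) (Sum.inr e') := by
  simp [subdivision, SimpleGraph.fromRel_adj]

lemma subdiv_adj_inl_inr {V : Type*} (G : SimpleGraph V) (u : V) (e : G.edgeSet) :
    (subdivision G).Adj (Sum.inl u) (Sum.inr e) ↔ u ∈ (e.1 : Sym2 V) := by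
  simp [subdivision, SimpleGraph.fromRel_adj]

lemma subdiv_adj_inr_inl {V : Type*} (G : SimpleGraph V) (u : V) (e : G.edgeSet) :
    (subdivision G).Adj (Sum.inr e) (Sum.inl u) ↔ u ∈ (e.1 : Sym2 V) := by
  rw [SimpleGraph.adj_comm]; exact subdiv_adj_inl_inr G u e

lemma walk_proj {V : Type*} (G : SimpleGraph V) :
    ∀ n (a b : V ⊕ G.edgeSet) (p : (subdivision G).Walk a b), p.length ≤ n →
      ∀ u v : V, a = Sum.inl u → b = Sum.inl v →
      ∃ q : G.Walk u v, 2 * q.length ≤ p.length := by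
  intro n
  induction n with
  | zero =>
    intro a b p hp u v ha hb
    have h0 : p.length = 0 := Nat.le_zero.mp hp
    have hab : a = b := SimpleGraph.Walk.eq_of_length_eq_zero h0
    have huv : u = v := by rw [ha, hb] at hab; exact Sum.inl.inj hab
    subst huv
    exact ⟨SimpleGraph.Walk.nil, by simp⟩
  | succ n ih =>
    intro a b p hp u v ha hb
    cases p with
    | nil =>
      have huv : u = v := by rw [ha] at hb; exact Sum.inl.inj hb
      subst huv
      exact ⟨SimpleGraph.Walk.nil, by simp⟩
    | @cons _ c _ h1 p' =>
      subst ha hb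
      cases c with
      | inl w => exact absurd h1 (subdiv_adj_inl_inl G u w)
      | inr e =>
        have hue : u ∈ (e.1 : Sym2 V) := (subdiv_adj_inl_inr G u e).mp h1
        cases p' with
        | @cons _ d _ h2 p'' =>
          cases d with
          | inr e' => exact absurd h2 (subdiv_adj_inr_inr G e e')
          | inl w =>
            have hwe : w ∈ (e.1 : Sym2 V) := (subdiv_adj_inr_inl G w e).mp h2
            have hlen : p''.length ≤ n := by
              simp only [SimpleGraph.Walk.length_cons] at hp; omega
            obtain ⟨q', hq'⟩ := ih (Sum.inl w) (Sum.inl v) p''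
              hlen w v rfl rfl
            by_cases huw : u = w
            · subst huw
              refine ⟨q', ?_⟩
              simp only [SimpleGraph.Walk.length_cons]; omega
            · have hadj : G.Adj u w := by
                have he : (e.1 : Sym2 V) = s(u, w) :=
                  (Sym2.mem_and_mem_iff huw).mp ⟨hue, hwe⟩
                have := e.2
                rw [he] at this
                exact this
              refine ⟨SimpleGraph.Walk.cons hadj q', ?_⟩
              simp only [SimpleGraph.Walk.length_cons]
              have : p''.length ≤ n := hlen
              omega

lemma dist_proj {V : Type*} (G : SimpleGraph V) (u v : V)
    (hr : (subdivision G).Reachable (Sum.inl u) (Sum.inl v)) :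
    G.Reachable u v ∧ 2 * G.dist u v ≤ (subdivision G).dist (Sum.inl u) (Sum.inl v) := by
  obtain ⟨p, hp⟩ := hr.exists_walk_length_eq_dist
  obtain ⟨q, hq⟩ := walk_proj G p.length _ _ p le_rfl u v rfl rfl
  refine ⟨⟨q⟩, ?_⟩
  have := G.dist_le q
  omega

/-- If a subcubic graph `G` admits a `(1,1,2,2)`-packing coloring, then its
subdivision `S(G)` admits a `(1,2,3,4,5)`-packing coloring, i.e. `χ_p(S(G)) ≤ 5`. -/
theorem subcubic_packing_chromatic_subdivision {V : Type*} (G : SimpleGraph V)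
    (hdeg : ∀ v : V, (G.neighborSet v).ncard ≤ 3)
    (h : ∃ f : V → Fin 4, IsPackingColoring G ![1, 1, 2, 2] f) :
    ∃ g : V ⊕ G.edgeSet → Fin 5, IsPackingColoring (subdivision G) ![1, 2, 3, 4, 5] g := by
  obtain ⟨f, hf⟩ := h
  refine ⟨Sum.elim (fun v => (f v).succ) (fun _ => 0), ?_⟩
  intro x y hxy hcol hr
  cases x with
  | inr e =>
    cases y with
    | inl v => exact absurd hcol.symm (Fin.succ_ne_zero (f v))
    | inr e' =>
      have hne : (subdivision G).dist (Sum.inr e) (Sum.inr e') ≠ 1 := by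
        intro h1
        exact subdiv_adj_inr_inr G e e'
          ((SimpleGraph.dist_eq_one_iff_adj).mp h1)
      have hpos : 0 < (subdivision G).dist (Sum.inr e) (Sum.inr e') :=
        hr.pos_dist_of_ne hxy
      simp only [Sum.elim_inr]
      have : (![1, 2, 3, 4, 5] : Fin 5 → ℕ) 0 = 1 := by decide
      rw [this]
      omega
  | inl u =>
    cases y with
    | inr e => exact absurd hcol (Fin.succ_ne_zero (f u))
    | inl v =>
      have huv : u ≠ v := fun h' => hxy (by rw [h'])
      have hfeq : f u = f v := Fin.succ_injective _ hcol
      obtain ⟨hreach, hdist⟩ := dist_proj G u v hr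
      have hG := hf u v huv hfeq hreach
      have key : ∀ i : Fin 4, (![1, 2, 3, 4, 5] : Fin 5 → ℕ) i.succ + 1
          ≤ 2 * ((![1, 1, 2, 2] : Fin 4 → ℕ) i + 1) := by decide
      have hk := key (f u)
      simp only [Sum.elim_inl]
      omega
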